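/- Let A and Ã be invertible n×n real matrices and 1 ≤ l < n, and suppose that the columns of A and Ã agree for all indices k with l < k ≤ n, i.e. A e_k = Ã e_k for all k > l. Then the vectors Y_k* computed from A coincide with the vectors Y_k* computed from Ã for all k > l; that is, the system (Y_k*)_{k=l+1}^n is uniquely determined by the columns (X_k)_{k=l+1}^n. -/

import Mathlib

open Matrix

noncomputable section

/-- `k`-th column of a matrix, as a vector of `EuclideanSpace ℝ (Fin n)`. -/
def col {n m : ℕ} (A : Matrix (Fin n) (Fin m) ℝ) (k : Fin m) : EuclideanSpace ℝ (Fin n) :=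
  WithLp.toLp 2 (fun i => A i k)

/-- A plain vector viewed in `EuclideanSpace ℝ (Fin n)`. -/
def toE {n : ℕ} (x : Fin n → ℝ) : EuclideanSpace ℝ (Fin n) := WithLp.toLp 2 x

/-- The `n × l` matrix of the first `l` columns of `A` (junk `0` columns if `l > n`). -/
def firstCols {n : ℕ} (A : Matrix (Fin n) (Fin n) ℝ) (l : ℕ) : Matrix (Fin n) (Fin l) ℝ :=
  fun i j => if h : (j : ℕ) < n then A i ⟨j, h⟩ else 0

/-- The `n × (n-l)` matrix of the last `n - l` columns of `A`. -/
def lastCols {n : ℕ} (A : Matrix (Fin n) (Fin n) ℝ) (l : ℕ) : Matrix (Fin n) (Fin (n - l)) ℝ :=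
  fun i j => A i ⟨l + j, by have := j.isLt; omega⟩

/-- `H_l`: the span of the last `n - l` columns of `A`, i.e. the columns `X_k` with
(0-based) index `k ≥ l` (paper's 1-based indices `k > l`). -/
def Hspan {n : ℕ} (A : Matrix (Fin n) (Fin n) ℝ) (l : ℕ) :
    Submodule ℝ (EuclideanSpace ℝ (Fin n)) :=
  Submodule.span ℝ (col A '' {k | l ≤ (k : ℕ)})

/-- `H_{l,k}`: the span of the columns `X_j` with (0-based) index `j ≥ l`, `j ≠ k`. -/
def Hspan' {n : ℕ} (A : Matrix (Fin n) (Fin n) ℝ) (l : ℕ) (k : Fin n) :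
    Submodule ℝ (EuclideanSpace ℝ (Fin n)) :=
  Submodule.span ℝ (col A '' {j | l ≤ (j : ℕ) ∧ j ≠ k})

/-- `Y_k* = P_l X_k*`, where `X_k*` is the `k`-th column of `(A⁻¹)ᵀ` and `P_l` is the
orthogonal projection onto `H_l`. -/
def Ystar {n : ℕ} (A : Matrix (Fin n) (Fin n) ℝ) (l : ℕ) (k : Fin n) :
    EuclideanSpace ℝ (Fin n) :=
  ↑((Hspan A l).orthogonalProjectionOnto (col A⁻¹ᵀ k))

/-- The `(n-l) × n` matrix `B` whose rows are `(Y_k*)ᵀ` for `k` ranging over the last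
`n - l` indices. -/
def Bmat {n : ℕ} (A : Matrix (Fin n) (Fin n) ℝ) (l : ℕ) : Matrix (Fin (n - l)) (Fin n) ℝ :=
  fun r i => Ystar A l ⟨l + r, by have := r.isLt; omega⟩ i

/-- Squared Hilbert–Schmidt (Frobenius) norm of a matrix. -/
def hsNormSq {n m : ℕ} (B : Matrix (Fin m) (Fin n) ℝ) : ℝ :=
  ∑ r, ∑ i, (B r i) ^ 2

/-- Hilbert–Schmidt (Frobenius) norm of a matrix. -/
def hsNorm {n m : ℕ} (B : Matrix (Fin m) (Fin n) ℝ) : ℝ :=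
  Real.sqrt (hsNormSq B)

/-- Operator (`ℓ² → ℓ²`) norm of a matrix, as the supremum of `‖Bx‖₂` over the unit
sphere. -/
def opNorm {n m : ℕ} (B : Matrix (Fin m) (Fin n) ℝ) : ℝ :=
  sSup ((fun x : EuclideanSpace ℝ (Fin n) => ‖toE (B *ᵥ fun i => x i)‖) '' {x | ‖x‖ = 1})

open scoped RealInnerProductSpace in
lemma inner_colInv_col {n : ℕ} (A : Matrix (Fin n) (Fin n) ℝ) (hA : IsUnit A) (k j : Fin n) :
    ⟪_root_.col A⁻¹ᵀ k, _root_.col A j⟫ = if k = j then 1 else 0 := by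
  have h : A⁻¹ * A = 1 := Matrix.nonsing_inv_mul A ((Matrix.isUnit_iff_isUnit_det A).1 hA)
  have h2 := congrFun (congrFun h k) j
  rw [Matrix.mul_apply, Matrix.one_apply] at h2
  simpa [_root_.col, PiLp.inner_apply, Matrix.transpose_apply, mul_comm] using h2

open scoped RealInnerProductSpace in
lemma inner_Ystar_col {n : ℕ} (A : Matrix (Fin n) (Fin n) ℝ) (hA : IsUnit A) (l : ℕ)
    (k j : Fin n) (hj : l ≤ (j : ℕ)) :
    ⟪Ystar A l k, _root_.col A j⟫ = if k = j then 1 else 0 := by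
  have hmem : _root_.col A j ∈ Hspan A l :=
    Submodule.subset_span ⟨j, hj, rfl⟩
  have horth : _root_.col A⁻¹ᵀ k - Ystar A l k ∈ (Hspan A l)ᗮ :=
    Submodule.sub_starProjection_mem_orthogonal (K := Hspan A l) _
  have h0 : ⟪_root_.col A⁻¹ᵀ k - Ystar A l k, _root_.col A j⟫ = 0 := by
    rw [real_inner_comm]
    exact (Submodule.mem_orthogonal _ _).1 horth _ hmem
  have := inner_colInv_col A hA k j
  rw [inner_sub_left] at h0
  linarith [this]

/-- **Corollary 2.3.** The system `(Y_k*)` is uniquely determined by the last `n - l`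
columns of the matrix: if two invertible matrices `A, A'` have the same columns at all
indices `k` with `l ≤ k`, then the corresponding vectors `Y_k*` coincide. -/
theorem Ystar_determined_by_last_columns (n l : ℕ) (hl : 1 ≤ l) (hln : l < n)
    (A A' : Matrix (Fin n) (Fin n) ℝ) (hA : IsUnit A) (hA' : IsUnit A')
    (hcols : ∀ k : Fin n, l ≤ (k : ℕ) → ∀ i, A i k = A' i k) :
    ∀ k : Fin n, l ≤ (k : ℕ) → Ystar A l k = Ystar A' l k := by
  intro k hk
  have hcol : ∀ j : Fin n, l ≤ (j : ℕ) → _root_.col A j = _root_.col A' j := by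
    intro j hj; ext i; exact hcols j hj i
  have hspan : Hspan A l = Hspan A' l := by
    unfold Hspan
    congr 1
    exact Set.image_congr fun j hj => hcol j hj
  set y := Ystar A l k with hy
  set y' := Ystar A' l k with hy'
  have hyH : y ∈ Hspan A l := ((Hspan A l).orthogonalProjectionOnto (_root_.col A⁻¹ᵀ k)).2
  have hy'H : y' ∈ Hspan A l := hspan ▸ ((Hspan A' l).orthogonalProjectionOnto (_root_.col A'⁻¹ᵀ k)).2
  have hinner : ∀ j : Fin n, l ≤ (j : ℕ) →
      inner ℝ (y - y') (_root_.col A j) = (0 : ℝ) := by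
    intro j hj
    rw [inner_sub_left, inner_Ystar_col A hA l k j hj, hcol j hj,
      inner_Ystar_col A' hA' l k j hj, sub_self]
  have horth : y - y' ∈ (Hspan A l)ᗮ := by
    rw [Submodule.mem_orthogonal']
    intro u hu
    induction hu using Submodule.span_induction with
    | mem v hv =>
      obtain ⟨j, hj, rfl⟩ := hv
      exact hinner j hj
    | zero => simp
    | add v w _ _ h1 h2 => rw [inner_add_right, h1, h2, add_zero]
    | smul c v _ h1 => rw [inner_smul_right, h1, mul_zero]
  have h0 : inner ℝ (y - y') (y - y') = (0 : ℝ) :=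
    (Submodule.mem_orthogonal _ _).1 horth _ (Submodule.sub_mem _ hyH hy'H)
  exact sub_eq_zero.1 (inner_self_eq_zero.1 h0)

end
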